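/- arXiv:2509.08107 — 2 statements merged into one kernel-verified Lean document; each statement's English description precedes it below -/
import Mathlib

section
/- Approximation of the minimax value by the Hedge trajectory: suppose I ≥ 2, let 0 < ε ≤ M, set η = ε/M² and T = ⌈2·M²·ln(I)/ε²⌉, and run the Hedge algorithm where in every round t ∈ {1,…,T} the point θ_t is a best response to p_t. Define v̄^ε = (1/T)·Σ_{t=1}^T R(p_t,θ_t). Then v̄ ≤ sup_{θ∈Θ} R(p̄_T,θ) ≤ v̄^ε ≤ v̄ + ε, where p̄_T = (1/T)·Σ_{t=1}^T p_t and v̄ = inf_{p∈Δ} f(p). -/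
open Finset

lemma exp_neg_le_quadratic {x : ℝ} (hx : 0 ≤ x) :
    Real.exp (-x) ≤ 1 - x + x ^ 2 / 2 := by
  have hd : ∀ y : ℝ, HasDerivAt (fun z : ℝ => 1 - z + z ^ 2 / 2 - Real.exp (-z))
      (y - 1 + Real.exp (-y)) y := by
    intro y
    have h1 : HasDerivAt (fun z : ℝ => Real.exp (-z)) (-Real.exp (-y)) y := by
      simpa using (hasDerivAt_neg y).exp
    have h2 : HasDerivAt (fun z : ℝ => 1 - z + z ^ 2 / 2) (-1 + y) y := by
      have h3 : HasDerivAt (fun z : ℝ => z ^ 2 / 2) ((2 * y ^ 1) / 2) y :=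
        (hasDerivAt_pow 2 y).div_const 2
      have h4 : HasDerivAt (fun z : ℝ => 1 - z) (-1 : ℝ) y := by
        simpa using (hasDerivAt_id y).const_sub 1
      exact (h4.add h3).congr_deriv (by ring)
    have := h2.sub h1
    exact this.congr_deriv (by ring)
  have hmono : MonotoneOn (fun z : ℝ => 1 - z + z ^ 2 / 2 - Real.exp (-z)) (Set.Ici 0) := by
    apply monotoneOn_of_deriv_nonneg (convex_Ici 0)
    · exact fun z _ => ((hd z).continuousAt).continuousWithinAt
    · exact fun z _ => ((hd z).differentiableAt).differentiableWithinAt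
    · intro z hz
      rw [(hd z).deriv]
      have := Real.add_one_le_exp (-z)
      linarith
  have h0 := hmono (Set.self_mem_Ici) (Set.mem_Ici.mpr hx) hx
  simp only [Real.exp_zero] at h0
  norm_num at h0
  linarith

/-- Approximation of the minimax value by the Hedge trajectory: with
`η = ε/M²` and `T = ⌈2 M² ln I / ε²⌉` and best responses `θ_t`, the quantity
`v̄^ε = (1/T) Σ_t R(p_t,θ_t)` satisfies
`v̄ ≤ sup_θ R(p̄_T,θ) ≤ v̄^ε ≤ v̄ + ε`. -/
theorem hedge_minimax_value_approximation
    (I : ℕ) (hI : 2 ≤ I) (Θ : Type*) [Nonempty Θ] (M : ℝ) (hM : 0 < M)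
    (R : Fin I → Θ → ℝ) (hR : ∀ i θ, 0 ≤ R i θ ∧ R i θ ≤ M)
    (ε : ℝ) (hε0 : 0 < ε) (hεM : ε ≤ M)
    (η : ℝ) (hη : η = ε / M ^ 2)
    (T : ℕ) (hT : T = ⌈2 * M ^ 2 * Real.log I / ε ^ 2⌉₊)
    (θ : ℕ → Θ) (w : ℕ → Fin I → ℝ) (p : ℕ → Fin I → ℝ)
    (hw0 : ∀ i, w 0 i = 1)
    (hw : ∀ t i, w (t + 1) i = w t i * Real.exp (-η * R i (θ (t + 1))))
    (hp : ∀ t i, p (t + 1) i = w t i / ∑ j, w t j)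
    (hbr : ∀ t ∈ Finset.Icc 1 T,
      ∑ i, p t i * R i (θ t) = ⨆ θ' : Θ, ∑ i, p t i * R i θ') :
    sInf {v : ℝ | ∃ q : Fin I → ℝ, (∀ i, 0 ≤ q i) ∧ ∑ i, q i = 1 ∧
        v = ⨆ θ' : Θ, ∑ i, q i * R i θ'}
      ≤ (⨆ θ' : Θ, ∑ i, ((1 / (T : ℝ)) * ∑ t ∈ Finset.Icc 1 T, p t i) * R i θ')
    ∧ (⨆ θ' : Θ, ∑ i, ((1 / (T : ℝ)) * ∑ t ∈ Finset.Icc 1 T, p t i) * R i θ')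
      ≤ (1 / (T : ℝ)) * ∑ t ∈ Finset.Icc 1 T, ∑ i, p t i * R i (θ t)
    ∧ (1 / (T : ℝ)) * ∑ t ∈ Finset.Icc 1 T, ∑ i, p t i * R i (θ t)
      ≤ sInf {v : ℝ | ∃ q : Fin I → ℝ, (∀ i, 0 ≤ q i) ∧ ∑ i, q i = 1 ∧
          v = ⨆ θ' : Θ, ∑ i, q i * R i θ'} + ε := by
  haveI : NeZero I := ⟨by omega⟩
  have hM2 : (0:ℝ) < M ^ 2 := by positivity
  have hηpos : 0 < η := by rw [hη]; positivity
  have hI1 : (1:ℝ) < (I:ℝ) := by exact_mod_cast (by omega : 1 < I)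
  have hlogI : 0 < Real.log I := Real.log_pos hI1
  have hT1 : 1 ≤ T := by
    rw [hT]
    exact Nat.one_le_iff_ne_zero.mpr (Nat.ceil_pos.mpr (by positivity)).ne'
  have hTpos : (0:ℝ) < (T:ℝ) := by exact_mod_cast hT1
  have hTge : 2 * M ^ 2 * Real.log I / ε ^ 2 ≤ (T:ℝ) := hT ▸ Nat.le_ceil _
  -- explicit form of weights
  have hwe : ∀ t i, w t i = Real.exp (-η * ∑ s ∈ Finset.Icc 1 t, R i (θ s)) := by
    intro t i
    induction t with
    | zero => simp [hw0]
    | succ n ih =>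
        rw [hw n i, ih, ← Real.exp_add, Finset.sum_Icc_succ_top (by omega : 1 ≤ n + 1)]
        congr 1
        ring
  have hwpos : ∀ t i, 0 < w t i := fun t i => by rw [hwe]; exact Real.exp_pos _
  have hWpos : ∀ t, 0 < ∑ j, w t j :=
    fun t => Finset.sum_pos (fun j _ => hwpos t j) Finset.univ_nonempty
  have hpnn : ∀ t i, 0 ≤ p (t+1) i := fun t i => by
    rw [hp]; exact div_nonneg (hwpos t i).le (hWpos t).le
  have hpsum : ∀ t, ∑ i, p (t+1) i = 1 := by
    intro t
    simp only [hp t]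
    rw [← Finset.sum_div, div_self (hWpos t).ne']
  -- bddAbove of payoff family for simplex points
  have hbdd : ∀ q : Fin I → ℝ, (∀ i, 0 ≤ q i) → (∑ i, q i = 1) →
      BddAbove (Set.range fun θ' : Θ => ∑ i, q i * R i θ') := by
    intro q hq hqs
    refine ⟨M, ?_⟩
    rintro v ⟨θ', rfl⟩
    calc ∑ i, q i * R i θ' ≤ ∑ i, q i * M :=
          Finset.sum_le_sum fun i _ => mul_le_mul_of_nonneg_left (hR i θ').2 (hq i)
      _ = M := by rw [← Finset.sum_mul, hqs, one_mul]
  -- one-step potential bound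
  have hstep : ∀ t, (∑ j, w (t+1) j) ≤
      (∑ j, w t j) * Real.exp (-(η * ∑ i, p (t+1) i * R i (θ (t+1))) + η^2 * M^2 / 2) := by
    intro t
    have hW := hWpos t
    have key : ∀ j : Fin I, w (t+1) j ≤ w t j * (1 - η * R j (θ (t+1)) + η^2 * M^2 / 2) := by
      intro j
      rw [hw]
      apply mul_le_mul_of_nonneg_left _ (hwpos t j).le
      have hq := exp_neg_le_quadratic (mul_nonneg hηpos.le (hR j (θ (t+1))).1)
      have hsq : (η * R j (θ (t+1)))^2 ≤ η^2 * M^2 := by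
        rw [mul_pow]
        exact mul_le_mul_of_nonneg_left
          (pow_le_pow_left₀ (hR j (θ (t+1))).1 (hR j (θ (t+1))).2 2) (by positivity)
      calc Real.exp (-η * R j (θ (t+1))) = Real.exp (-(η * R j (θ (t+1)))) := by rw [neg_mul]
        _ ≤ 1 - η * R j (θ (t+1)) + (η * R j (θ (t+1)))^2 / 2 := hq
        _ ≤ 1 - η * R j (θ (t+1)) + η^2 * M^2 / 2 := by linarith
    have hWA : (∑ j, w t j) * (∑ i, p (t+1) i * R i (θ (t+1)))
        = ∑ j, w t j * R j (θ (t+1)) := by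
      rw [Finset.mul_sum]
      refine Finset.sum_congr rfl fun i _ => ?_
      rw [hp t i]
      field_simp
    calc ∑ j, w (t+1) j ≤ ∑ j, w t j * (1 - η * R j (θ (t+1)) + η^2 * M^2 / 2) :=
          Finset.sum_le_sum fun j _ => key j
      _ = (∑ j, w t j) * (1 - η * (∑ i, p (t+1) i * R i (θ (t+1))) + η^2 * M^2 / 2) := by
          rw [Finset.sum_congr rfl (fun j _ => by ring :
            ∀ j ∈ Finset.univ, w t j * (1 - η * R j (θ (t+1)) + η^2 * M^2 / 2)
              = w t j * (1 + η^2 * M^2 / 2) - η * (w t j * R j (θ (t+1)))),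
            Finset.sum_sub_distrib, ← Finset.sum_mul, ← Finset.mul_sum, ← hWA]
          ring
      _ ≤ (∑ j, w t j) * Real.exp (-(η * ∑ i, p (t+1) i * R i (θ (t+1))) + η^2 * M^2 / 2) := by
          apply mul_le_mul_of_nonneg_left _ hW.le
          have := Real.add_one_le_exp (-(η * ∑ i, p (t+1) i * R i (θ (t+1))) + η^2 * M^2 / 2)
          linarith
  -- iterated bound
  have hiter : ∀ t, (∑ j, w t j) ≤
      (I:ℝ) * Real.exp (-(η * ∑ s ∈ Finset.Icc 1 t, ∑ i, p s i * R i (θ s))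
        + (t:ℝ) * (η^2 * M^2 / 2)) := by
    intro t
    induction t with
    | zero => simp [hw0]
    | succ n ih =>
        calc ∑ j, w (n+1) j
            ≤ (∑ j, w n j) * Real.exp (-(η * ∑ i, p (n+1) i * R i (θ (n+1))) + η^2 * M^2 / 2) :=
              hstep n
          _ ≤ ((I:ℝ) * Real.exp (-(η * ∑ s ∈ Finset.Icc 1 n, ∑ i, p s i * R i (θ s))
                + (n:ℝ) * (η^2 * M^2 / 2)))
              * Real.exp (-(η * ∑ i, p (n+1) i * R i (θ (n+1))) + η^2 * M^2 / 2) :=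
              mul_le_mul_of_nonneg_right ih (Real.exp_pos _).le
          _ = (I:ℝ) * Real.exp (-(η * ∑ s ∈ Finset.Icc 1 (n+1), ∑ i, p s i * R i (θ s))
                + ((n:ℝ)+1) * (η^2 * M^2 / 2)) := by
              rw [mul_assoc, ← Real.exp_add, Finset.sum_Icc_succ_top (by omega : 1 ≤ n + 1)]
              congr 1
              ring
          _ = (I:ℝ) * Real.exp (-(η * ∑ s ∈ Finset.Icc 1 (n+1), ∑ i, p s i * R i (θ s))
                + ((n+1:ℕ):ℝ) * (η^2 * M^2 / 2)) := by push_cast; ring_nf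
  -- key regret inequality (multiplied by η)
  set S : ℝ := ∑ t ∈ Finset.Icc 1 T, ∑ i, p t i * R i (θ t) with hSdef
  have hkey : ∀ i : Fin I, η * S ≤ η * (∑ s ∈ Finset.Icc 1 T, R i (θ s))
      + Real.log I + (T:ℝ) * (η^2 * M^2 / 2) := by
    intro i
    have h1 : Real.exp (-η * ∑ s ∈ Finset.Icc 1 T, R i (θ s))
        ≤ (I:ℝ) * Real.exp (-(η * S) + (T:ℝ) * (η^2 * M^2 / 2)) := by
      rw [← hwe]
      exact le_trans (Finset.single_le_sum (fun j _ => (hwpos T j).le) (Finset.mem_univ i))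
        (hiter T)
    have h2 := Real.log_le_log (Real.exp_pos _) h1
    rw [Real.log_exp, Real.log_mul (by positivity) (Real.exp_pos _).ne', Real.log_exp] at h2
    linarith
  -- regret vs any simplex point
  have hfin : ∀ q : Fin I → ℝ, (∀ i, 0 ≤ q i) → (∑ i, q i = 1) →
      S ≤ (T:ℝ) * ((⨆ θ' : Θ, ∑ i, q i * R i θ') + ε) := by
    intro q hq hqs
    set F : ℝ := ⨆ θ' : Θ, ∑ i, q i * R i θ' with hF
    have hq2 : η * S ≤ η * ((T:ℝ) * F) + Real.log I + (T:ℝ) * (η^2 * M^2 / 2) := by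
      have hswap : (∑ i, q i * (∑ s ∈ Finset.Icc 1 T, R i (θ s)))
          = ∑ s ∈ Finset.Icc 1 T, ∑ i, q i * R i (θ s) := by
        simp_rw [Finset.mul_sum]
        exact Finset.sum_comm
      have hFb : ∀ s ∈ Finset.Icc 1 T, ∑ i, q i * R i (θ s) ≤ F :=
        fun s _ => le_ciSup (hbdd q hq hqs) (θ s)
      have hsum := Finset.sum_le_sum (fun i (_ : i ∈ Finset.univ) =>
        mul_le_mul_of_nonneg_left (hkey i) (hq i))
      rw [← Finset.sum_mul, hqs, one_mul] at hsum
      have hR1 : ∑ i, q i * (η * (∑ s ∈ Finset.Icc 1 T, R i (θ s))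
          + Real.log I + (T:ℝ) * (η^2 * M^2 / 2))
          = η * (∑ s ∈ Finset.Icc 1 T, ∑ i, q i * R i (θ s))
            + Real.log I + (T:ℝ) * (η^2 * M^2 / 2) := by
        rw [← hswap]
        rw [Finset.sum_congr rfl (fun i _ => by ring :
          ∀ i ∈ Finset.univ, q i * (η * (∑ s ∈ Finset.Icc 1 T, R i (θ s))
            + Real.log I + (T:ℝ) * (η^2 * M^2 / 2))
            = η * (q i * ∑ s ∈ Finset.Icc 1 T, R i (θ s))
              + q i * (Real.log I + (T:ℝ) * (η^2 * M^2 / 2)))]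
        rw [Finset.sum_add_distrib, ← Finset.mul_sum, ← Finset.sum_mul, hqs, one_mul]
        ring
      rw [hR1] at hsum
      have hbound : ∑ s ∈ Finset.Icc 1 T, ∑ i, q i * R i (θ s) ≤ (T:ℝ) * F := by
        calc ∑ s ∈ Finset.Icc 1 T, ∑ i, q i * R i (θ s)
            ≤ ∑ s ∈ Finset.Icc 1 T, F := Finset.sum_le_sum hFb
          _ = (T:ℝ) * F := by
              rw [Finset.sum_const, Nat.card_Icc, nsmul_eq_mul]
              norm_num
      have := mul_le_mul_of_nonneg_left hbound hηpos.le
      linarith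
    have e2 : 2 * M^2 * Real.log I ≤ (T:ℝ) * ε^2 := by
      have := (div_le_iff₀ (by positivity : (0:ℝ) < ε^2)).mp hTge
      linarith
    have e3 : M^2 * (η * S) = ε * S := by rw [hη]; field_simp
    have e4 : M^2 * (η * ((T:ℝ)*F) + Real.log I + (T:ℝ)*(η^2*M^2/2))
        = ε * ((T:ℝ)*F) + M^2 * Real.log I + (T:ℝ)*ε^2/2 := by
      rw [hη]; field_simp
    have h5 := mul_le_mul_of_nonneg_left hq2 hM2.le
    rw [e3, e4] at h5
    have e5 : ε * ((T:ℝ) * (F + ε)) = ε * ((T:ℝ)*F) + (T:ℝ)*ε^2 := by ring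
    exact le_of_mul_le_mul_left (by linarith) hε0
  -- the averaged point is in the simplex
  have hpnn' : ∀ t ∈ Finset.Icc 1 T, ∀ i, 0 ≤ p t i := by
    intro t ht i
    have h1 := (Finset.mem_Icc.mp ht).1
    obtain ⟨s, rfl⟩ : ∃ s, t = s + 1 := ⟨t - 1, by omega⟩
    exact hpnn s i
  have hpsum' : ∀ t ∈ Finset.Icc 1 T, ∑ i, p t i = 1 := by
    intro t ht
    have h1 := (Finset.mem_Icc.mp ht).1
    obtain ⟨s, rfl⟩ : ∃ s, t = s + 1 := ⟨t - 1, by omega⟩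
    exact hpsum s
  have hpbnn : ∀ i, 0 ≤ (1/(T:ℝ)) * ∑ t ∈ Finset.Icc 1 T, p t i :=
    fun i => mul_nonneg (by positivity)
      (Finset.sum_nonneg fun t ht => hpnn' t ht i)
  have hpbsum : ∑ i, (1/(T:ℝ)) * ∑ t ∈ Finset.Icc 1 T, p t i = 1 := by
    rw [← Finset.mul_sum, Finset.sum_comm, Finset.sum_congr rfl hpsum',
      Finset.sum_const, Nat.card_Icc, nsmul_eq_mul]
    norm_num
    exact inv_mul_cancel₀ hTpos.ne'
  have hmem : (⨆ θ' : Θ, ∑ i, ((1/(T:ℝ)) * ∑ t ∈ Finset.Icc 1 T, p t i) * R i θ')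
      ∈ {v : ℝ | ∃ q : Fin I → ℝ, (∀ i, 0 ≤ q i) ∧ ∑ i, q i = 1 ∧
        v = ⨆ θ' : Θ, ∑ i, q i * R i θ'} :=
    ⟨fun i => (1/(T:ℝ)) * ∑ t ∈ Finset.Icc 1 T, p t i, hpbnn, hpbsum, rfl⟩
  have hbddb : BddBelow {v : ℝ | ∃ q : Fin I → ℝ, (∀ i, 0 ≤ q i) ∧ ∑ i, q i = 1 ∧
      v = ⨆ θ' : Θ, ∑ i, q i * R i θ'} := by
    refine ⟨0, ?_⟩
    rintro v ⟨q, hq, hqs, rfl⟩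
    exact le_trans (Finset.sum_nonneg fun i _ =>
        mul_nonneg (hq i) (hR i (Classical.arbitrary Θ)).1)
      (le_ciSup (hbdd q hq hqs) (Classical.arbitrary Θ))
  refine ⟨csInf_le hbddb hmem, ?_, ?_⟩
  · -- part 2
    apply ciSup_le
    intro θ'
    have hswap2 : ∑ i, ((1/(T:ℝ)) * ∑ t ∈ Finset.Icc 1 T, p t i) * R i θ'
        = (1/(T:ℝ)) * ∑ t ∈ Finset.Icc 1 T, ∑ i, p t i * R i θ' := by
      simp_rw [mul_assoc]
      rw [← Finset.mul_sum]
      congr 1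
      simp_rw [Finset.sum_mul]
      exact Finset.sum_comm
    rw [hswap2]
    apply mul_le_mul_of_nonneg_left _ (by positivity)
    apply Finset.sum_le_sum
    intro t ht
    rw [hbr t ht]
    exact le_ciSup (hbdd (fun i => p t i) (hpnn' t ht) (hpsum' t ht)) θ'
  · -- part 3
    have hne : {v : ℝ | ∃ q : Fin I → ℝ, (∀ i, 0 ≤ q i) ∧ ∑ i, q i = 1 ∧
        v = ⨆ θ' : Θ, ∑ i, q i * R i θ'}.Nonempty := ⟨_, hmem⟩
    have hlb : ∀ b ∈ {v : ℝ | ∃ q : Fin I → ℝ, (∀ i, 0 ≤ q i) ∧ ∑ i, q i = 1 ∧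
        v = ⨆ θ' : Θ, ∑ i, q i * R i θ'}, (1/(T:ℝ)) * S - ε ≤ b := by
      rintro b ⟨q, hq, hqs, rfl⟩
      have h8 := hfin q hq hqs
      have h9 : (1/(T:ℝ)) * S ≤ (⨆ θ' : Θ, ∑ i, q i * R i θ') + ε := by
        have := mul_le_mul_of_nonneg_left h8 (by positivity : (0:ℝ) ≤ 1/(T:ℝ))
        rwa [← mul_assoc, one_div_mul_cancel hTpos.ne', one_mul] at this
      linarith
    have := le_csInf hne hlb
    linarith
end

section
/- Potential-function bounds for the Hedge weights: let η > 0, T ≥ 1, and let θ_1,…,θ_T be an arbitrary sequence in Θ. Then (a) Σ_{i=1}^I w_{i,T} ≤ I·exp(−η·Σ_{t=1}^T Σ_{i=1}^I p_{i,t}·R(i,θ_t) + (η²/2)·Σ_{t=1}^T Σ_{i=1}^I p_{i,t}·R(i,θ_t)²), and (b) for every i ∈ {1,…,I}, Σ_{j=1}^I w_{j,T} ≥ exp(−η·Σ_{t=1}^T R(i,θ_t)). -/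
open Finset

lemma hedge_exp_neg_le (x : ℝ) (hx : 0 ≤ x) :
    Real.exp (-x) ≤ 1 - x + x ^ 2 / 2 := by
  set g : ℝ → ℝ := fun z => 1 - z + z ^ 2 / 2 - Real.exp (-z) with hg
  have hderiv : ∀ y : ℝ, HasDerivAt g (-1 + y + Real.exp (-y)) y := by
    intro y
    have h1 : HasDerivAt (fun z : ℝ => 1 - z + z ^ 2 / 2) (-1 + y) y := by
      have := ((hasDerivAt_id y).const_sub 1).add
        (((hasDerivAt_pow 2 y)).div_const 2)
      simpa [mul_comm, Pi.add_def] using this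
    have h2 : HasDerivAt (fun z : ℝ => Real.exp (-z)) (-Real.exp (-y)) y := by
      have := (Real.hasDerivAt_exp (-y)).comp y ((hasDerivAt_id y).neg)
      simpa [Function.comp_def] using this
    simpa [hg, sub_eq_add_neg, add_assoc, Pi.add_def, Pi.neg_def, Pi.sub_def] using h1.sub h2
  have hmono : MonotoneOn g (Set.Ici (0:ℝ)) := by
    apply monotoneOn_of_deriv_nonneg (convex_Ici 0)
      (Continuous.continuousOn (by fun_prop))
    · intro y hy
      exact (hderiv y).differentiableAt.differentiableWithinAt
    · intro y hy
      rw [(hderiv y).deriv]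
      have := Real.add_one_le_exp (-y)
      simp only [interior_Ici, Set.mem_Ioi] at hy
      linarith
  have h0 : g 0 = 0 := by simp [hg]
  have := hmono (Set.self_mem_Ici) (Set.mem_Ici.mpr hx) hx
  rw [h0] at this
  simp only [hg] at this
  linarith

/-- Potential-function bounds for the Hedge weights: for any `η > 0`, `T ≥ 1`,
and any sequence `θ_1,…,θ_T`,
(a) `Σ_i w_{i,T} ≤ I · exp(−η Σ_t Σ_i p_{i,t} R(i,θ_t) + (η²/2) Σ_t Σ_i p_{i,t} R(i,θ_t)²)`,
and (b) `Σ_j w_{j,T} ≥ exp(−η Σ_t R(i,θ_t))` for every `i`. -/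
theorem hedge_potential_bounds
    (I : ℕ) (hI : 0 < I) (Θ : Type*) [Nonempty Θ] (M : ℝ) (hM : 0 < M)
    (R : Fin I → Θ → ℝ) (hR : ∀ i θ, 0 ≤ R i θ ∧ R i θ ≤ M)
    (η : ℝ) (hη : 0 < η) (T : ℕ) (hT : 1 ≤ T)
    (θ : ℕ → Θ) (w : ℕ → Fin I → ℝ) (p : ℕ → Fin I → ℝ)
    (hw0 : ∀ i, w 0 i = 1)
    (hw : ∀ t i, w (t + 1) i = w t i * Real.exp (-η * R i (θ (t + 1))))
    (hp : ∀ t i, p (t + 1) i = w t i / ∑ j, w t j) :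
    (∑ i, w T i
      ≤ (I : ℝ) * Real.exp
          (-η * ∑ t ∈ Finset.Icc 1 T, ∑ i, p t i * R i (θ t)
            + (η ^ 2 / 2) * ∑ t ∈ Finset.Icc 1 T, ∑ i, p t i * R i (θ t) ^ 2))
    ∧ ∀ i, Real.exp (-η * ∑ t ∈ Finset.Icc 1 T, R i (θ t)) ≤ ∑ j, w T j := by
  have hwpos : ∀ t i, 0 < w t i := by
    intro t
    induction t with
    | zero => intro i; simp [hw0]
    | succ n ih => intro i; rw [hw]; exact mul_pos (ih i) (Real.exp_pos _)
  have hWpos : ∀ t, 0 < ∑ i, w t i :=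
    fun t => Finset.sum_pos (fun i _ => hwpos t i) (by haveI : Nonempty (Fin I) := Fin.pos_iff_nonempty.mp hI; exact Finset.univ_nonempty)
  -- part (b): exact formula for w
  have hwf : ∀ n i, w n i = Real.exp (-η * ∑ t ∈ Finset.Icc 1 n, R i (θ t)) := by
    intro n
    induction n with
    | zero => intro i; simp [hw0]
    | succ m ih =>
      intro i
      rw [hw, ih, Finset.sum_Icc_succ_top (Nat.le_add_left 1 m), ← Real.exp_add]
      ring_nf
  have partb : ∀ i, Real.exp (-η * ∑ t ∈ Finset.Icc 1 T, R i (θ t)) ≤ ∑ j, w T j := by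
    intro i
    rw [← hwf T i]
    exact Finset.single_le_sum (fun j _ => (hwpos T j).le) (Finset.mem_univ i)
  refine ⟨?_, partb⟩
  -- part (a): induction
  have key : ∀ n, ∑ i, w n i
      ≤ (I : ℝ) * Real.exp
          (-η * ∑ t ∈ Finset.Icc 1 n, ∑ i, p t i * R i (θ t)
            + (η ^ 2 / 2) * ∑ t ∈ Finset.Icc 1 n, ∑ i, p t i * R i (θ t) ^ 2) := by
    intro n
    induction n with
    | zero => simp [hw0]
    | succ m ih =>
      have hpsum : ∑ i, p (m + 1) i = 1 := by
        simp only [hp]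
        rw [← Finset.sum_div, div_self (hWpos m).ne']
      have hwp : ∀ i, w m i = p (m + 1) i * ∑ j, w m j := by
        intro i; rw [hp, div_mul_cancel₀ _ (hWpos m).ne']
      have hstep1 : ∑ i, w (m + 1) i
          = (∑ j, w m j) * ∑ i, p (m + 1) i * Real.exp (-η * R i (θ (m + 1))) := by
        rw [Finset.mul_sum]
        refine Finset.sum_congr rfl (fun i _ => ?_)
        rw [hw, hwp i]; ring
      set A := ∑ i, p (m + 1) i * R i (θ (m + 1)) with hA
      set B := ∑ i, p (m + 1) i * R i (θ (m + 1)) ^ 2 with hB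
      have hppos : ∀ i, 0 ≤ p (m + 1) i := by
        intro i; rw [hp]; exact div_nonneg (hwpos m i).le (hWpos m).le
      have hstep2 : ∑ i, p (m + 1) i * Real.exp (-η * R i (θ (m + 1)))
          ≤ 1 - η * A + η ^ 2 / 2 * B := by
        have hle : ∑ i, p (m + 1) i * Real.exp (-η * R i (θ (m + 1)))
            ≤ ∑ i, p (m + 1) i * (1 - η * R i (θ (m + 1)) + (η * R i (θ (m + 1))) ^ 2 / 2) := by
          refine Finset.sum_le_sum (fun i _ => ?_)
          have h1 := hedge_exp_neg_le (η * R i (θ (m + 1)))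
            (mul_nonneg hη.le (hR i (θ (m + 1))).1)
          have h2 : -η * R i (θ (m + 1)) = -(η * R i (θ (m + 1))) := by ring
          rw [h2]
          exact mul_le_mul_of_nonneg_left h1 (hppos i)
        refine hle.trans (le_of_eq ?_)
        have heq : ∑ i, p (m + 1) i * (1 - η * R i (θ (m + 1)) + (η * R i (θ (m + 1))) ^ 2 / 2)
            = (∑ i, p (m + 1) i) - η * A + η ^ 2 / 2 * B := by
          rw [hA, hB, Finset.mul_sum, Finset.mul_sum, ← Finset.sum_sub_distrib,
            ← Finset.sum_add_distrib]
          exact Finset.sum_congr rfl fun i _ => by ring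
        rw [heq, hpsum]
      have hstep3 : 1 - η * A + η ^ 2 / 2 * B ≤ Real.exp (-η * A + η ^ 2 / 2 * B) := by
        have := Real.add_one_le_exp (-η * A + η ^ 2 / 2 * B)
        linarith
      have hchain : ∑ i, w (m + 1) i
          ≤ (∑ j, w m j) * Real.exp (-η * A + η ^ 2 / 2 * B) := by
        rw [hstep1]
        exact mul_le_mul_of_nonneg_left (hstep2.trans hstep3) (hWpos m).le
      refine hchain.trans ?_
      have hfin : ((I : ℝ) * Real.exp
          (-η * ∑ t ∈ Finset.Icc 1 m, ∑ i, p t i * R i (θ t)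
            + (η ^ 2 / 2) * ∑ t ∈ Finset.Icc 1 m, ∑ i, p t i * R i (θ t) ^ 2))
          * Real.exp (-η * A + η ^ 2 / 2 * B)
          = (I : ℝ) * Real.exp
          (-η * ∑ t ∈ Finset.Icc 1 (m + 1), ∑ i, p t i * R i (θ t)
            + (η ^ 2 / 2) * ∑ t ∈ Finset.Icc 1 (m + 1), ∑ i, p t i * R i (θ t) ^ 2) := by
        rw [Finset.sum_Icc_succ_top (Nat.le_add_left 1 m),
            Finset.sum_Icc_succ_top (Nat.le_add_left 1 m), mul_assoc, ← Real.exp_add,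
            hA, hB]
        ring_nf
      rw [← hfin]
      exact mul_le_mul_of_nonneg_right ih (Real.exp_pos _).le
  exact key T
end
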